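/- Let S be a finite nonempty set of points of ℝ^n, β > 0 and y ∈ ℝ^n with S_*(y) ≠ S. Let π(x|y) := exp(−β‖y−x‖²/2) / Σ_{x'∈S} exp(−β‖y−x'‖²/2) for x ∈ S, and let π_*(x|y) := 1/|S_*(y)| if x ∈ S_*(y) and 0 otherwise. Then Σ_{x∈S} |π(x|y) − π_*(x|y)| ≤ 2|S| exp(−β c(y)). -/

import Mathlib

open scoped Classical BigOperators

noncomputable section

/-- `dist(y,S) = min_{x∈S} ‖y−x‖` (as the infimum of a finite nonempty set of reals). -/
def distS {n : ℕ} (S : Finset (EuclideanSpace ℝ (Fin n))) (y : EuclideanSpace ℝ (Fin n)) : ℝ :=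
  sInf ((fun x => ‖y - x‖) '' ↑S)

/-- `S_*(y)`, the set of closest points of `S` to `y`. -/
def Sstar {n : ℕ} (S : Finset (EuclideanSpace ℝ (Fin n))) (y : EuclideanSpace ℝ (Fin n)) :
    Finset (EuclideanSpace ℝ (Fin n)) :=
  S.filter fun x => ‖y - x‖ = distS S y

/-- The energy gap `c(y) = min_{x ∈ S∖S_*(y)} ‖y−x‖²/2 − dist(y,S)²/2`. -/
def gap {n : ℕ} (S : Finset (EuclideanSpace ℝ (Fin n))) (y : EuclideanSpace ℝ (Fin n)) : ℝ :=
  sInf ((fun x => ‖y - x‖ ^ 2 / 2) '' (↑S \ ↑(Sstar S y))) - distS S y ^ 2 / 2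

/-- The Gibbs (softmax) weight `π(x|y) = exp(−β‖y−x‖²/2) / ∑_{x'∈S} exp(−β‖y−x'‖²/2)`. -/
def gibbsW {n : ℕ} (S : Finset (EuclideanSpace ℝ (Fin n))) (β : ℝ)
    (x y : EuclideanSpace ℝ (Fin n)) : ℝ :=
  Real.exp (-β * ‖y - x‖ ^ 2 / 2) / ∑ x' ∈ S, Real.exp (-β * ‖y - x'‖ ^ 2 / 2)

/-- The uniform weight `π_*(x|y)` on the set of closest points `S_*(y)`. -/
def unifW {n : ℕ} (S : Finset (EuclideanSpace ℝ (Fin n)))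
    (x y : EuclideanSpace ℝ (Fin n)) : ℝ :=
  if x ∈ Sstar S y then ((Sstar S y).card : ℝ)⁻¹ else 0

/-- from the proof of Lemma 6.7(b) of the paper. For a finite nonempty
`S ⊂ ℝ^n`, `β > 0` and `y` with `S_*(y) ≠ S`, the total variation between the Gibbs weights
and the uniform weights on the closest points satisfies
`∑_{x∈S} |π(x|y) − π_*(x|y)| ≤ 2|S| exp(−β c(y))`. -/
theorem statement4 {n : ℕ} (S : Finset (EuclideanSpace ℝ (Fin n))) (hS : S.Nonempty)
    (β : ℝ) (hβ : 0 < β) (y : EuclideanSpace ℝ (Fin n)) (hne : Sstar S y ≠ S) :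
    ∑ x ∈ S, |gibbsW S β x y - unifW S x y| ≤ 2 * S.card * Real.exp (-β * gap S y) := by
  classical
  set d := distS S y with hd
  set c := gap S y with hc
  set w : EuclideanSpace ℝ (Fin n) → ℝ := fun x => Real.exp (-β * ‖y - x‖ ^ 2 / 2) with hw
  set m : ℝ := Real.exp (-β * d ^ 2 / 2) with hm
  set ε : ℝ := Real.exp (-β * c) with hε
  set Z : ℝ := ∑ x' ∈ S, w x' with hZ
  -- facts about d
  have hfin : ((fun x => ‖y - x‖) '' ↑S).Finite := S.finite_toSet.image _
  have hne' : ((fun x => ‖y - x‖) '' ↑S).Nonempty :=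
    (Finset.coe_nonempty.mpr hS).image _
  have hdmem : ∃ x₀ ∈ S, ‖y - x₀‖ = d := by
    obtain ⟨x₀, hx₀, hx⟩ := hne'.csInf_mem hfin
    exact ⟨x₀, hx₀, hx⟩
  have hdle : ∀ x ∈ S, d ≤ ‖y - x‖ := fun x hx =>
    csInf_le hfin.bddBelow ⟨x, hx, rfl⟩
  obtain ⟨x₀, hx₀S, hx₀d⟩ := hdmem
  have hx₀star : x₀ ∈ Sstar S y := Finset.mem_filter.mpr ⟨hx₀S, hx₀d⟩
  have hstarne : (Sstar S y).Nonempty := ⟨x₀, hx₀star⟩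
  set T : Finset (EuclideanSpace ℝ (Fin n)) := S \ Sstar S y with hT
  have hTsub : T ⊆ S := Finset.sdiff_subset
  have hTne : T.Nonempty := by
    obtain ⟨x, hxS, hxn⟩ := Finset.exists_of_ssubset
      ((Finset.filter_subset _ S).ssubset_of_ne hne)
    exact ⟨x, Finset.mem_sdiff.mpr ⟨hxS, hxn⟩⟩
  -- gap facts
  have hcle : ∀ x ∈ T, c + d ^ 2 / 2 ≤ ‖y - x‖ ^ 2 / 2 := by
    intro x hx
    have hx' : x ∈ (↑S : Set _) \ ↑(Sstar S y) := by
      rcases Finset.mem_sdiff.mp hx with ⟨h1, h2⟩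
      exact ⟨h1, fun h => h2 h⟩
    have hfin' : ((fun x => ‖y - x‖ ^ 2 / 2) '' ((↑S : Set _) \ ↑(Sstar S y))).Finite :=
      ((S.finite_toSet).diff).image _
    have hle := csInf_le hfin'.bddBelow ⟨x, hx', rfl⟩
    have key : gap S y + distS S y ^ 2 / 2 ≤ ‖y - x‖ ^ 2 / 2 := by
      unfold gap; linarith
    exact key
  -- weights on Sstar and T
  have hwstar : ∀ x ∈ Sstar S y, w x = m := by
    intro x hx
    have hxd := (Finset.mem_filter.mp hx).2
    show Real.exp (-β * ‖y - x‖ ^ 2 / 2) = Real.exp (-β * d ^ 2 / 2)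
    rw [hd, hxd]
  have hwT : ∀ x ∈ T, w x ≤ ε * m := by
    intro x hx
    have h1 := hcle x hx
    rw [hw, hε, hm, ← Real.exp_add]
    apply Real.exp_le_exp.mpr
    nlinarith
  have hwpos : ∀ x, 0 < w x := fun x => Real.exp_pos _
  have hmpos : 0 < m := Real.exp_pos _
  have hεpos : 0 < ε := Real.exp_pos _
  set k : ℕ := (Sstar S y).card with hk
  have hkpos : 0 < k := Finset.card_pos.mpr hstarne
  set R : ℝ := ∑ x ∈ T, w x with hR
  have hRpos : 0 < R := Finset.sum_pos (fun x _ => hwpos x) hTne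
  have hZsplit : Z = k * m + R := by
    have hstar : ∑ x ∈ Sstar S y, w x = (k : ℝ) * m := by
      rw [Finset.sum_congr rfl hwstar, Finset.sum_const, nsmul_eq_mul]
    rw [hZ, hR, ← Finset.sum_sdiff (show Sstar S y ⊆ S from Finset.filter_subset _ S), hstar]
    ring
  have hZpos : 0 < Z := by
    rw [hZsplit]; positivity
  have hRle : R ≤ (S.card : ℝ) * (ε * m) := by
    calc R ≤ T.card • (ε * m) := Finset.sum_le_card_nsmul T w (ε * m) hwT
    _ = (T.card : ℝ) * (ε * m) := by rw [nsmul_eq_mul]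
    _ ≤ (S.card : ℝ) * (ε * m) := by
        have h : (T.card : ℝ) ≤ S.card := by
          exact_mod_cast Finset.card_le_card hTsub
        exact mul_le_mul_of_nonneg_right h (by positivity)
  have hmZ : m ≤ Z := by
    rw [hZsplit]
    have : (1 : ℝ) ≤ k := by exact_mod_cast hkpos
    nlinarith
  -- compute the sum
  have hgibbs : ∀ x, gibbsW S β x y = w x / Z := fun x => rfl
  have hmZk : (k : ℝ) * m ≤ Z := by rw [hZsplit]; linarith
  have hk' : (0:ℝ) < k := by exact_mod_cast hkpos
  have hsum : ∑ x ∈ S, |gibbsW S β x y - unifW S x y| = 2 * R / Z := by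
    rw [← Finset.sum_sdiff (show Sstar S y ⊆ S from Finset.filter_subset _ S)]
    have hTpart : ∑ x ∈ T, |gibbsW S β x y - unifW S x y| = R / Z := by
      rw [hR, Finset.sum_div]
      apply Finset.sum_congr rfl
      intro x hx
      have hxn : x ∉ Sstar S y := (Finset.mem_sdiff.mp hx).2
      rw [hgibbs, unifW, if_neg hxn, sub_zero, abs_of_pos (div_pos (hwpos x) hZpos)]
    have hstarpart : ∑ x ∈ Sstar S y, |gibbsW S β x y - unifW S x y|
        = 1 - k * m / Z := by
      have hmem : ∀ x ∈ Sstar S y, |gibbsW S β x y - unifW S x y| = (k : ℝ)⁻¹ - m / Z := by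
        intro x hx
        rw [hgibbs, unifW, if_pos hx, hwstar x hx, ← hk, abs_of_nonpos, neg_sub]
        rw [sub_nonpos, div_le_iff₀ hZpos, inv_mul_eq_div, le_div_iff₀ hk']
        linarith
      rw [Finset.sum_congr rfl hmem, Finset.sum_const, nsmul_eq_mul, ← hk]
      field_simp
    have hZR : Z - (k : ℝ) * m = R := by rw [hZsplit]; ring
    have h1 : (1:ℝ) - ↑k * m / Z = R / Z := by
      rw [← hZR, sub_div, div_self (ne_of_gt hZpos)]
    rw [hTpart, hstarpart, h1]
    ring
  rw [hsum]
  have h1 : 2 * R / Z ≤ 2 * R / m := by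
    gcongr
  have h2 : 2 * R / m ≤ 2 * S.card * ε := by
    rw [div_le_iff₀ hmpos]
    nlinarith
  linarith

end
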